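/- Let n be a positive integer and let α_1 < α_2 < … < α_n and β_1 < β_2 < … < β_n be strictly increasing sequences of positive real numbers. Then the n×n Cauchy matrix M with entries M_{ij} = 1/(α_i + β_j) has positive determinant: det(M) > 0. -/

import Mathlib

open Matrix BigOperators

lemma cauchy_det_pos_aux : ∀ (n : ℕ) (α β : Fin n → ℝ),
    StrictMono α → StrictMono β → (∀ i j, 0 < α i + β j) →
    0 < (Matrix.of fun i j => 1 / (α i + β j)).det := by
  intro n
  induction n with
  | zero =>
    intro α β _ _ _
    simp [Matrix.det_fin_zero]
  | succ n ih =>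
    intro α β hα hβ hpos
    have hne : ∀ i j, α i + β j ≠ 0 := fun i j => (hpos i j).ne'
    set M : Matrix (Fin (n+1)) (Fin (n+1)) ℝ := Matrix.of fun i j => 1 / (α i + β j) with hM
    -- Step 1: subtract row 0 from other rows
    set A : Matrix (Fin (n+1)) (Fin (n+1)) ℝ := Matrix.of fun i j =>
      if i = 0 then 1 / (α 0 + β j)
      else (α 0 - α i) / ((α i + β j) * (α 0 + β j)) with hA
    have h1 : A.det = M.det := by
      apply Matrix.det_eq_of_forall_row_eq_smul_add_const
        (fun i => if i = 0 then 0 else (-1 : ℝ)) 0 (by simp)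
      intro i j
      by_cases hi : i = 0
      · subst hi; simp [hA, hM]
      · simp only [hA, hM, Matrix.of_apply, if_neg hi]
        field_simp [hne i j, hne 0 j]
        ring
    -- Step 2: factor columns by 1/(α 0 + β j) and rows by (α 0 - α i)
    set C : Matrix (Fin (n+1)) (Fin (n+1)) ℝ := Matrix.of fun i j =>
      if i = 0 then 1 else 1 / (α i + β j) with hC
    have h2 : A.det = (∏ j, 1 / (α 0 + β j)) *
        ((∏ i, (if i = 0 then 1 else α 0 - α i)) * C.det) := by
      rw [← Matrix.det_mul_column (fun i => if i = 0 then (1:ℝ) else α 0 - α i) C,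
        ← Matrix.det_mul_row (fun j => 1 / (α 0 + β j))]
      congr 1
      ext i j
      by_cases hi : i = 0
      · subst hi; simp [hA, hC]
      · simp only [hA, hC, Matrix.of_apply, if_neg hi]
        field_simp [hne i j, hne 0 j]
    -- Step 3: subtract column 0 from other columns
    set E : Matrix (Fin (n+1)) (Fin (n+1)) ℝ := Matrix.of fun i j =>
      if i = 0 then (if j = 0 then 1 else 0)
      else if j = 0 then 1 / (α i + β 0)
      else (β 0 - β j) / ((α i + β j) * (α i + β 0)) with hE
    have h3 : E.det = C.det := by
      rw [← Matrix.det_transpose E, ← Matrix.det_transpose C]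
      apply Matrix.det_eq_of_forall_row_eq_smul_add_const
        (fun j => if j = 0 then 0 else (-1 : ℝ)) 0 (by simp)
      intro j i
      by_cases hj : j = 0
      · subst hj
        by_cases hi : i = 0 <;> simp [hE, hC, hi]
      · by_cases hi : i = 0
        · subst hi; simp [hE, hC, hj]
        · simp only [hE, hC, Matrix.transpose_apply, Matrix.of_apply, if_neg hi, if_neg hj]
          field_simp [hne i 0, hne i j]
          ring
    -- Step 4: Laplace expansion along row 0
    have h4 : E.det = (E.submatrix Fin.succ Fin.succ).det := by
      rw [Matrix.det_succ_row_zero]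
      rw [Finset.sum_eq_single 0]
      · simp [hE, Fin.succAbove_zero]
      · intro j _ hj
        simp [hE, hj]
      · simp
    -- Step 5: factor the submatrix
    have h5 : (E.submatrix Fin.succ Fin.succ).det =
        (∏ j : Fin n, (β 0 - β j.succ)) * ((∏ i : Fin n, 1 / (α i.succ + β 0)) *
          (Matrix.of fun i j : Fin n => 1 / (α i.succ + β j.succ)).det) := by
      rw [← Matrix.det_mul_column (fun i : Fin n => 1 / (α i.succ + β 0)),
        ← Matrix.det_mul_row (fun j : Fin n => (β 0 - β j.succ))]
      congr 1
      ext i j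
      simp only [Matrix.submatrix_apply, hE, Matrix.of_apply,
        if_neg (Fin.succ_ne_zero i), if_neg (Fin.succ_ne_zero j)]
      field_simp
    -- Inductive hypothesis for the smaller Cauchy matrix
    have hsmall : 0 < (Matrix.of fun i j : Fin n => 1 / (α i.succ + β j.succ)).det :=
      ih (fun i => α i.succ) (fun j => β j.succ)
        (fun a b hab => hα (Fin.succ_lt_succ_iff.mpr hab))
        (fun a b hab => hβ (Fin.succ_lt_succ_iff.mpr hab))
        (fun i j => hpos i.succ j.succ)
    -- Combine everything
    have key : M.det = (∏ j, 1 / (α 0 + β j)) * ((∏ i : Fin n, 1 / (α i.succ + β 0)) *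
        ((∏ i : Fin n, (α 0 - α i.succ) * (β 0 - β i.succ)) *
          (Matrix.of fun i j : Fin n => 1 / (α i.succ + β j.succ)).det)) := by
      rw [← h1, h2, ← h3, h4, h5]
      rw [Fin.prod_univ_succ (fun i => if i = 0 then (1:ℝ) else α 0 - α i)]
      simp only [if_pos rfl, one_mul, if_neg (Fin.succ_ne_zero _)]
      rw [Finset.prod_mul_distrib]
      simp only [if_true, one_div]
      ring
    rw [hM] at key
    rw [key]
    have e1 : (0:ℝ) < ∏ j, 1 / (α 0 + β j) :=
      Finset.prod_pos fun j _ => by have := hpos 0 j; positivity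
    have e2 : (0:ℝ) < ∏ i : Fin n, 1 / (α i.succ + β 0) :=
      Finset.prod_pos fun i _ => by have := hpos i.succ 0; positivity
    have e3 : (0:ℝ) < ∏ i : Fin n, (α 0 - α i.succ) * (β 0 - β i.succ) := by
      apply Finset.prod_pos
      intro i _
      apply mul_pos_of_neg_of_neg
      · simpa using sub_neg.mpr (hα (Fin.succ_pos i))
      · simpa using sub_neg.mpr (hβ (Fin.succ_pos i))
    exact mul_pos e1 (mul_pos e2 (mul_pos e3 hsmall))

/-- A Cauchy matrix built from two strictly increasing sequences of positive reals
has positive determinant. -/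
theorem cauchy_det_pos (n : ℕ) (hn : 0 < n) (α β : Fin n → ℝ)
    (hα : StrictMono α) (hβ : StrictMono β)
    (hαpos : ∀ i, 0 < α i) (hβpos : ∀ i, 0 < β i) :
    0 < (Matrix.of fun i j => 1 / (α i + β j)).det := by
  exact cauchy_det_pos_aux n α β hα hβ fun i j => add_pos (hαpos i) (hβpos j)
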